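/- Let ε ≥ 0 and let 0 = b_1 < … < b_k = n−1 be an ε-feasible sequence. Then every point of the cloud lies in the ε-offset of the polygonal path with vertices p b_1, …, p b_k: for every s ∈ {0,…,n−1}, Metric.infDist (p s) (⋃_{i=2}^{k} segment ℝ (p b_{i−1}) (p b_i)) ≤ ε. (Geometric claim used in the proof of Corollary 2: orthogonal ε-approximation of each monotone subcloud implies the cloud is contained in the Euclidean ε-offset of the reconstructed polygonal path, in the sense of Definition 1.) -/

import Mathlib

/-- The projection value `t s = ⟪p s, u⟫` of the cloud point `p s` onto the direction `u`. -/
noncomputable def projVal {d n : ℕ} (p : Fin n → EuclideanSpace ℝ (Fin d))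
    (u : EuclideanSpace ℝ (Fin d)) (s : Fin n) : ℝ :=
  inner ℝ (p s) u

/-- The point `q(s,i,j)` of the straight segment `[p i, p j]` whose projection
onto `u` equals `t s`. -/
noncomputable def segPoint {d n : ℕ} (p : Fin n → EuclideanSpace ℝ (Fin d))
    (u : EuclideanSpace ℝ (Fin d)) (s i j : Fin n) : EuclideanSpace ℝ (Fin d) :=
  p i + ((projVal p u s - projVal p u i) / (projVal p u j - projVal p u i)) • (p j - p i)

/-- The orthogonal distance `dOrth(s,i,j)` from `p s` to the segment `[p i, p j]`,
measured orthogonally to `u`. -/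
noncomputable def dOrth {d n : ℕ} (p : Fin n → EuclideanSpace ℝ (Fin d))
    (u : EuclideanSpace ℝ (Fin d)) (s i j : Fin n) : ℝ :=
  dist (p s) (segPoint p u s i j)

/-- The orthogonal distance `D(i,j)` from the segment `[p i, p j]` to the cloud:
the maximum of `dOrth(s,i,j)` over `i ≤ s ≤ j` (endpoints contribute `0`). -/
noncomputable def segCloudDist {d n : ℕ} (p : Fin n → EuclideanSpace ℝ (Fin d))
    (u : EuclideanSpace ℝ (Fin d)) (i j : Fin n) : ℝ :=
  (insert (0 : ℝ) ((Finset.Icc i j).image fun s => dOrth p u s i j)).max'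
    (Finset.insert_nonempty _ _)

/-- An `ε`-greedy sequence `0 = a_1 < … < a_m = n-1` (here with `m + 1` vertices
`a 0, …, a (Fin.last m)`): (a) for every step and every `k` with `a_{i-1} < k ≤ a_i`,
`D(a_{i-1}, k) ≤ ε`; (b) for every step with `a_i < n - 1`, `D(a_{i-1}, a_i + 1) > ε`. -/
def IsGreedySeq {d n : ℕ} (p : Fin n → EuclideanSpace ℝ (Fin d))
    (u : EuclideanSpace ℝ (Fin d)) (ε : ℝ) {m : ℕ} (a : Fin (m + 1) → Fin n) : Prop :=
  StrictMono a ∧ (a 0 : ℕ) = 0 ∧ (a (Fin.last m) : ℕ) = n - 1 ∧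
  (∀ i : Fin m, ∀ k : Fin n, a i.castSucc < k → k ≤ a i.succ →
    segCloudDist p u (a i.castSucc) k ≤ ε) ∧
  (∀ i : Fin m, ∀ h : (a i.succ : ℕ) + 1 < n,
    ε < segCloudDist p u (a i.castSucc) ⟨(a i.succ : ℕ) + 1, h⟩)

/-- An `ε`-feasible sequence `0 = b_1 < … < b_k = n-1` (here with `k + 1` vertices):
`D(b_{i-1}, b_i) ≤ ε` for every step. -/
def IsFeasibleSeq {d n : ℕ} (p : Fin n → EuclideanSpace ℝ (Fin d))
    (u : EuclideanSpace ℝ (Fin d)) (ε : ℝ) {k : ℕ} (b : Fin (k + 1) → Fin n) : Prop :=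
  StrictMono b ∧ (b 0 : ℕ) = 0 ∧ (b (Fin.last k) : ℕ) = n - 1 ∧
  ∀ i : Fin k, segCloudDist p u (b i.castSucc) (b i.succ) ≤ ε

/-- Geometric claim used in the proof of Corollary 2: every point of the cloud lies
in the Euclidean `ε`-offset of the polygonal path of an `ε`-feasible sequence. -/
theorem feasible_path_offset {d n : ℕ} (hd : 1 ≤ d) (hn : 2 ≤ n)
    (p : Fin n → EuclideanSpace ℝ (Fin d)) (u : EuclideanSpace ℝ (Fin d))
    (hu : ‖u‖ = 1) (hmono : StrictMono (projVal p u))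
    (ε : ℝ) (hε : 0 ≤ ε) {k : ℕ} (b : Fin (k + 1) → Fin n)
    (hb : IsFeasibleSeq p u ε b) (s : Fin n) :
    Metric.infDist (p s)
      (⋃ i : Fin k, segment ℝ (p (b i.castSucc)) (p (b i.succ))) ≤ ε := by

  classical
  -- k ≥ 1
  obtain ⟨hsm, hb0, hblast, hbD⟩ := hb
  have hk : 0 < k := by
    rcases Nat.eq_zero_or_pos k with hk0 | hk
    · subst hk0
      have : (b 0 : ℕ) = (b (Fin.last 0) : ℕ) := by rfl
      omega
    · exact hk
  -- s ≤ b (Fin.last k)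
  have hslast : s ≤ b (Fin.last k) := by
    rw [Fin.le_def, hblast]
    have := s.isLt
    omega
  -- minimal j with s ≤ b j
  set S : Finset (Fin (k + 1)) := Finset.univ.filter (fun j => s ≤ b j) with hS
  have hSne : S.Nonempty := ⟨Fin.last k, by simp [hS, hslast]⟩
  set j := S.min' hSne with hj
  have hjmem : s ≤ b j := by
    have := S.min'_mem hSne
    simpa [hS] using this
  -- key lemma: if ii ≤ s ≤ jj with ii < jj and D(ii,jj) ≤ ε, then done via segPoint
  have key : ∀ i : Fin k, b i.castSucc ≤ s → s ≤ b i.succ →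
      Metric.infDist (p s)
        (⋃ i : Fin k, segment ℝ (p (b i.castSucc)) (p (b i.succ))) ≤ ε := by
    intro i h1 h2
    set ii := b i.castSucc
    set jj := b i.succ
    have hij : ii < jj := hsm (Fin.castSucc_lt_succ : i.castSucc < i.succ)
    have htij : projVal p u ii < projVal p u jj := hmono hij
    have ht1 : projVal p u ii ≤ projVal p u s := hmono.monotone h1
    have ht2 : projVal p u s ≤ projVal p u jj := hmono.monotone h2
    set lam := (projVal p u s - projVal p u ii) / (projVal p u jj - projVal p u ii)
      with hlam
    have hlam0 : 0 ≤ lam := div_nonneg (by linarith) (by linarith)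
    have hlam1 : lam ≤ 1 := by
      rw [hlam, div_le_one (by linarith)]; linarith
    have hmem : segPoint p u s ii jj ∈ segment ℝ (p ii) (p jj) := by
      rw [segment_eq_image']
      exact ⟨lam, ⟨hlam0, hlam1⟩, rfl⟩
    have hmemU : segPoint p u s ii jj ∈
        ⋃ i : Fin k, segment ℝ (p (b i.castSucc)) (p (b i.succ)) :=
      Set.mem_iUnion.2 ⟨i, hmem⟩
    have hdist : dist (p s) (segPoint p u s ii jj) ≤ ε := by
      have hsIcc : s ∈ Finset.Icc ii jj := Finset.mem_Icc.2 ⟨h1, h2⟩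
      have hmem' : dOrth p u s ii jj ∈
          insert (0 : ℝ) ((Finset.Icc ii jj).image fun t => dOrth p u t ii jj) :=
        Finset.mem_insert.2 (Or.inr (Finset.mem_image.2 ⟨s, hsIcc, rfl⟩))
      have := Finset.le_max' _ _ hmem'
      exact le_trans this (hbD i)
    exact le_trans (Metric.infDist_le_dist_of_mem hmemU) hdist
  by_cases hj0 : j = 0
  · -- s = b 0
    have hs0 : s = b 0 := by
      have h1 : s ≤ b 0 := hj0 ▸ hjmem
      have h2 : b 0 ≤ s := by
        rw [Fin.le_def, hb0]; omega
      exact le_antisymm h1 h2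
    have hc : (⟨0, hk⟩ : Fin k).castSucc = 0 := rfl
    refine key ⟨0, hk⟩ ?_ ?_
    · rw [hs0, hc]
    · rw [hs0, ← hc]
      exact (hsm Fin.castSucc_lt_succ).le
  · obtain ⟨i, heq⟩ := Fin.eq_succ_of_ne_zero hj0
    rw [heq] at hjmem
    refine key i ?_ hjmem
    have hnot : i.castSucc ∉ S := by
      intro hmem
      have := S.min'_le _ hmem
      rw [← hj, heq] at this
      exact absurd this (not_le.2 (Fin.castSucc_lt_succ : i.castSucc < i.succ))
    have : ¬ s ≤ b i.castSucc := by simpa [hS] using hnot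
    exact (not_le.1 this).le
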